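/- arXiv:2201.02370 — 2 statements merged into one kernel-verified Lean document; each statement's English description precedes it below -/
import Mathlib

section
/- Let d ≥ 1 and let Q ⊆ ℝ^d be a non-empty, convex, open, bounded set. Then there exists a linear bijection Ψ : ℝ^d → ℝ^d such that τ_d / (2^d d^d) ≤ |Ψ(Q)| / (diam Ψ(Q))^d ≤ τ_d / 2^{d/2}. -/
open MeasureTheory Real Set
open scoped BigOperators ENNReal RealInnerProductSpace

noncomputable section

/-- Physicists' Hermite polynomials `H_n`, via the recursion
`H_0 = 1`, `H_{n+1}(x) = 2 x H_n(x) - H_n'(x)`. -/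
def physHermite : ℕ → Polynomial ℝ
  | 0 => 1
  | n + 1 => 2 * Polynomial.X * physHermite n - Polynomial.derivative (physHermite n)

/-- The `L²`-normalized Hermite functions on `ℝ`:
`h_n(t) = (2^n n! √π)^{-1/2} H_n(t) e^{-t²/2}`. -/
def hermiteFun (n : ℕ) (t : ℝ) : ℝ :=
  ((2 : ℝ) ^ n * (n.factorial : ℝ) * Real.sqrt π) ^ (-(1 : ℝ) / 2) *
    (physHermite n).eval t * Real.exp (-t ^ 2 / 2)

/-- The tensor Hermite function `Φ_α(y) = ∏_j h_{α_j}(y_j)` on `ℝ^{d₁}`. -/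
def hermiteProd {d₁ : ℕ} (α : Fin d₁ → ℕ) (y : EuclideanSpace ℝ (Fin d₁)) : ℝ :=
  ∏ j, hermiteFun (α j) (y j)

/-- `g : ℝ^n → ℂ` has Fourier transform (convention `ĝ(ξ) = c ∫ g(x) e^{-i x·ξ} dx`)
supported in the closed Euclidean ball of radius `r`:  `g` is pointwise the inverse
Fourier integral of a square-integrable function vanishing outside that ball. -/
def Bandlimited {n : ℕ} (r : ℝ) (g : EuclideanSpace ℝ (Fin n) → ℂ) : Prop :=
  ∃ F : EuclideanSpace ℝ (Fin n) → ℂ,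
    MemLp F 2 volume ∧
    (∀ ξ, ξ ∉ Metric.closedBall (0 : EuclideanSpace ℝ (Fin n)) r → F ξ = 0) ∧
    ∀ z, g z = ∫ ξ, F ξ * Complex.exp (Complex.I * ((inner ℝ ξ z : ℝ) : ℂ))

/-- The first `d₁` coordinates of a point of `ℝ^{d₁+d₂}`. -/
def fstC (d₁ d₂ : ℕ) (x : EuclideanSpace ℝ (Fin (d₁ + d₂))) : EuclideanSpace ℝ (Fin d₁) :=
  WithLp.toLp 2 (fun i => x (Fin.castAdd d₂ i))

/-- The last `d₂` coordinates of a point of `ℝ^{d₁+d₂}`. -/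
def sndC (d₁ d₂ : ℕ) (x : EuclideanSpace ℝ (Fin (d₁ + d₂))) : EuclideanSpace ℝ (Fin d₂) :=
  WithLp.toLp 2 (fun j => x (Fin.natAdd d₁ j))

/-- Gluing `y ∈ ℝ^{d₁}` and `z ∈ ℝ^{d₂}` to the point `(y,z) ∈ ℝ^{d₁+d₂}`. -/
def glue {d₁ d₂ : ℕ} (y : EuclideanSpace ℝ (Fin d₁)) (z : EuclideanSpace ℝ (Fin d₂)) :
    EuclideanSpace ℝ (Fin (d₁ + d₂)) :=
  WithLp.toLp 2 (fun i => Fin.addCases (fun i₁ => y i₁) (fun j => z j) i : Fin (d₁ + d₂) → ℝ)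

/-- Degree `|α|` of a multiindex. -/
def mdeg {n : ℕ} (α : Fin n → ℕ) : ℕ := ∑ i, α i

/-- Factorial `α!` of a multiindex. -/
def mfact {n : ℕ} (α : Fin n → ℕ) : ℕ := ∏ i, (α i).factorial

/-- The spectral subspace `E_λ = Ran 1_{(-∞,λ]}(-Δ + |y|²)` on `L²(ℝ^{d₁+d₂})`, realized
concretely as the set of (smooth representatives of) functions of the form
`f(y,z) = Σ_{2|α|+d₁ ≤ λ} Φ_α(y) g_α(z)` with each `g_α` square-integrable with Fourier
transform supported in the closed ball of radius `(λ - 2|α| - d₁)^{1/2}`. -/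
def SpecSubspace (d₁ d₂ : ℕ) (lam : ℝ) (f : EuclideanSpace ℝ (Fin (d₁ + d₂)) → ℂ) : Prop :=
  ∃ (S : Finset (Fin d₁ → ℕ)) (g : (Fin d₁ → ℕ) → EuclideanSpace ℝ (Fin d₂) → ℂ),
    (∀ α ∈ S, 2 * (mdeg α : ℝ) + d₁ ≤ lam) ∧
    (∀ α ∈ S, Bandlimited (Real.sqrt (lam - (2 * (mdeg α : ℝ) + d₁))) (g α)) ∧
    ∀ x, f x = ∑ α ∈ S, (hermiteProd α (fstC d₁ d₂ x) : ℂ) * g α (sndC d₁ d₂ x)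

/-- The open cube `Λ_L(x) = x + (-L/2, L/2)^n`. -/
def cube {n : ℕ} (L : ℝ) (x : EuclideanSpace ℝ (Fin n)) : Set (EuclideanSpace ℝ (Fin n)) :=
  {y | ∀ i, |y i - x i| < L / 2}

/-- First-order partial derivative in coordinate `i`. -/
def pderiv1 {n : ℕ} (i : Fin n) (f : EuclideanSpace ℝ (Fin n) → ℂ) :
    EuclideanSpace ℝ (Fin n) → ℂ :=
  fun x => fderiv ℝ f x (EuclideanSpace.single i 1)

/-- Iterated partial derivatives along a list of coordinates. -/
def listDeriv {n : ℕ} : List (Fin n) → (EuclideanSpace ℝ (Fin n) → ℂ) →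
    EuclideanSpace ℝ (Fin n) → ℂ
  | [], f => f
  | i :: is, f => pderiv1 i (listDeriv is f)

/-- The partial derivative `∂^α` for a multiindex `α`. -/
def mderiv {n : ℕ} (α : Fin n → ℕ) (f : EuclideanSpace ℝ (Fin n) → ℂ) :
    EuclideanSpace ℝ (Fin n) → ℂ :=
  listDeriv ((List.finRange n).flatMap fun i => List.replicate (α i) i) f

/-- `C_B(m,λ) = 2^m ∏_{k=0}^{m-1} (λ + 2k)`. -/
def CB (m : ℕ) (lam : ℝ) : ℝ := 2 ^ m * ∏ k ∈ Finset.range m, (lam + 2 * k)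

/-- `(Q_k)_{k ∈ ι}` is an (at most countable) essential covering of `ℝ^n` by measurable
sets, of multiplicity at most `κ`. -/
def IsEssentialCovering {n : ℕ} {ι : Type*} (Q : ι → Set (EuclideanSpace ℝ (Fin n)))
    (κ : ℝ) : Prop :=
  Countable ι ∧ (∀ k, MeasurableSet (Q k)) ∧
    volume ((Set.univ : Set (EuclideanSpace ℝ (Fin n))) \ ⋃ k, Q k) = 0 ∧
    ∀ x, ∑' k, (Q k).indicator (fun _ => (1 : ℝ≥0∞)) x ≤ ENNReal.ofReal κ

/-- The set `K_c` of indices whose `Q_k` meets `B(0, Cλ^{1/2}) × ℝ^{d₂}`, where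
`C = 32 d₁ (1 + √(log κ))`. -/
def coveringCore (d₁ d₂ : ℕ) {ι : Type*} (Q : ι → Set (EuclideanSpace ℝ (Fin (d₁ + d₂))))
    (κ lam : ℝ) : Set ι :=
  {k | (Q k ∩ {x | fstC d₁ d₂ x ∈
      Metric.ball (0 : EuclideanSpace ℝ (Fin d₁))
        (32 * d₁ * (1 + Real.sqrt (Real.log κ)) * Real.sqrt lam)}).Nonempty}

/-- The set `K_g` of good indices for `f`: those `k` for which the localized
Bernstein-type inequality holds on `Q_k` for all `m ≥ 1`. -/
def goodIdx (d₁ d₂ : ℕ) {ι : Type*} (Q : ι → Set (EuclideanSpace ℝ (Fin (d₁ + d₂))))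
    (κ lam : ℝ) (f : EuclideanSpace ℝ (Fin (d₁ + d₂)) → ℂ) : Set ι :=
  {k | ∀ m : ℕ, 1 ≤ m →
    ∑ α ∈ Finset.Nat.antidiagonalTuple (d₁ + d₂) m,
        (1 / (mfact α : ℝ)) * ∫ x in Q k, ‖mderiv α f x‖ ^ 2 ≤
      2 ^ (m + 1) * κ * (CB m lam / m.factorial) * ∫ x in Q k, ‖f x‖ ^ 2}

/-- Embedding `ℝ^n ↪ ℂ^n`. -/
def cembed {n : ℕ} (x : EuclideanSpace ℝ (Fin n)) : EuclideanSpace ℂ (Fin n) :=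
  WithLp.toLp 2 (fun i => (x i : ℂ))

/-- The set `Q(x) = B(x^{(1)}, ρ(x^{(1)})) × Λ_L(x^{(2)})`. -/
def QSet (d₁ d₂ : ℕ) (ρ : EuclideanSpace ℝ (Fin d₁) → ℝ) (L : ℝ)
    (x : EuclideanSpace ℝ (Fin (d₁ + d₂))) : Set (EuclideanSpace ℝ (Fin (d₁ + d₂))) :=
  {w | fstC d₁ d₂ w ∈ Metric.ball (fstC d₁ d₂ x) (ρ (fstC d₁ d₂ x)) ∧
    sndC d₁ d₂ w ∈ cube L (sndC d₁ d₂ x)}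

/-- The operator `P g = -Σ_{j ∈ J} ∂_j² g + (Σ_{i ∈ I} x_i²) g + #(I∩J) · g`. -/
def Pop {n : ℕ} (I J : Finset (Fin n)) (f : EuclideanSpace ℝ (Fin n) → ℂ) :
    EuclideanSpace ℝ (Fin n) → ℂ :=
  fun x => -(∑ j ∈ J, pderiv1 j (pderiv1 j f) x) +
    ((∑ i ∈ I, (x i) ^ 2 : ℝ) : ℂ) * f x + ((I ∩ J).card : ℂ) * f x



namespace JohnAux

abbrev V (d : ℕ) := EuclideanSpace ℝ (Fin d)

variable {d : ℕ}

/-- diagonal linear map -/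
def dmap (w : Fin d → ℝ) : V d →ₗ[ℝ] V d where
  toFun u := WithLp.toLp 2 (fun i => w i * u i)
  map_add' u v := by ext i; simp [mul_add]
  map_smul' c u := by ext i; simp; ring

@[simp] lemma dmap_apply (w : Fin d → ℝ) (u : V d) (i : Fin d) : dmap w u i = w i * u i := rfl

lemma det_dmap (w : Fin d → ℝ) : LinearMap.det (dmap w) = ∏ i, w i := by
  classical
  let b := (EuclideanSpace.basisFun (Fin d) ℝ).toBasis
  rw [← LinearMap.det_toMatrix b]
  have : LinearMap.toMatrix b b (dmap w) = Matrix.diagonal w := by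
    ext i j
    rw [LinearMap.toMatrix_apply]
    simp [b, Matrix.diagonal, EuclideanSpace.single_apply]
  rw [this, Matrix.det_diagonal]

def dequiv (w : Fin d → ℝ) (hw : ∀ i, w i ≠ 0) : V d ≃ₗ[ℝ] V d :=
  LinearEquiv.ofLinear (dmap w) (dmap fun i => (w i)⁻¹)
    (by ext u i; show w i * ((w i)⁻¹ * u i) = u i; rw [← mul_assoc, mul_inv_cancel₀ (hw i), one_mul])
    (by ext u i; show (w i)⁻¹ * (w i * u i) = u i; rw [← mul_assoc, inv_mul_cancel₀ (hw i), one_mul])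

@[simp] lemma dequiv_apply (w : Fin d → ℝ) (hw : ∀ i, w i ≠ 0) (u : V d) :
    dequiv w hw u = dmap w u := rfl

end JohnAux

namespace JohnAux
section Core
open scoped RealInnerProductSpace

lemma det_dmap_ite {d : ℕ} (i₀ : Fin d) (a b : ℝ) :
    LinearMap.det (dmap (fun i : Fin d => if i = i₀ then a else b)) = a * b ^ (d - 1) := by
  classical
  rw [det_dmap, ← Finset.mul_prod_erase Finset.univ _ (Finset.mem_univ i₀), if_pos rfl]
  congr 1
  rw [Finset.prod_congr rfl (fun i hi => if_neg (Finset.ne_of_mem_erase hi)),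
    Finset.prod_const, Finset.card_erase_of_mem (Finset.mem_univ i₀), Finset.card_univ,
    Fintype.card_fin]

set_option maxHeartbeats 2000000 in
lemma john_core {d : ℕ} (hd : 1 ≤ d) {C : Set (V d)} (hC : Convex ℝ C)
    (hB : Metric.closedBall 0 1 ⊆ C) {y : V d} (hy : y ∈ C) (hyn : (d : ℝ) < ‖y‖) :
    ∃ (A : V d →ₗ[ℝ] V d) (c : V d),
      (∀ u ∈ Metric.closedBall (0 : V d) 1, A u + c ∈ C) ∧ 1 < |LinearMap.det A| := by
  classical
  set s : ℝ := ‖y‖ with hs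
  have hd1 : (1 : ℝ) ≤ d := by exact_mod_cast hd
  have hs1 : 1 < s := lt_of_le_of_lt hd1 hyn
  have hs0 : 0 < s := lt_trans one_pos hs1
  set δ : ℝ := s - d with hδ
  have hδ0 : 0 < δ := sub_pos.2 hyn
  have hδs : δ ≤ s := by simp only [hδ]; nlinarith
  have h8 : (0:ℝ) < 8 * d * s ^ 2 := by positivity
  set ε : ℝ := δ / (8 * d * s ^ 2) with hε
  have hεpos : 0 < ε := div_pos hδ0 h8
  have hdε : (d : ℝ) * ε ≤ 1 / 8 := by
    rw [hε, mul_div_assoc', div_le_div_iff₀ h8 (by norm_num)]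
    nlinarith
  have hε8 : ε ≤ 1 / 8 := by nlinarith
  have hkmε : ((d:ℝ) - 1) * (s - 1) * ε ≤ δ / 8 := by
    have h9 : ((d:ℝ)-1)*(s-1) ≤ (d:ℝ) * s^2 := by nlinarith
    rw [hε, mul_div_assoc', div_le_div_iff₀ h8 (by norm_num)]
    nlinarith [mul_le_mul_of_nonneg_right h9 hδ0.le]
  set a : ℝ := 1 + (s - 1) * ε with ha
  set γ : ℝ := (s - 1) * ε with hγ
  have h2ε : 1 - 2 * ε > 0 := by nlinarith
  set b : ℝ := Real.sqrt (1 - 2 * ε) with hb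
  have hb2 : b ^ 2 = 1 - 2 * ε := Real.sq_sqrt h2ε.le
  have hbpos : 0 < b := Real.sqrt_pos.2 h2ε
  have ha1 : 1 ≤ a := by nlinarith
  -- the unit vector e and the reflection R with R e = E₀
  set e : V d := s⁻¹ • y with he
  have hey : y = s • e := by rw [he, smul_smul, mul_inv_cancel₀ hs0.ne', one_smul]
  have hne : ‖e‖ = 1 := by
    rw [he, norm_smul, norm_inv, Real.norm_eq_abs, abs_of_pos hs0, ← hs,
      inv_mul_cancel₀ hs0.ne']
  set i₀ : Fin d := ⟨0, hd⟩ with hi₀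
  set E₀ : V d := EuclideanSpace.single i₀ 1 with hE₀
  have hnE₀ : ‖E₀‖ = 1 := by rw [hE₀, EuclideanSpace.norm_single]; norm_num
  set R : V d ≃ₗᵢ[ℝ] V d := Submodule.reflection (ℝ ∙ (e - E₀))ᗮ with hR
  have hRe : R e = E₀ := Submodule.reflection_sub (by rw [hne, hnE₀])
  have hRR : ∀ v : V d, R (R v) = v := fun v => Submodule.reflection_reflection _ v
  have hRE₀ : R E₀ = e := by rw [← hRe, hRR]
  set w : Fin d → ℝ := fun i => if i = i₀ then a else b with hw
  set D : V d →ₗ[ℝ] V d := dmap w with hD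
  set Rl : V d →ₗ[ℝ] V d := R.toLinearEquiv.toLinearMap with hRl
  have hRlapp : ∀ v : V d, Rl v = R v := fun v => rfl
  set A : V d →ₗ[ℝ] V d := Rl ∘ₗ D ∘ₗ Rl with hA
  -- formula for D
  have hDv : ∀ v : V d, D v = b • v + ((a - b) * v i₀) • E₀ := by
    intro v; ext i
    simp only [hD, dmap_apply, hw, hE₀, PiLp.add_apply, PiLp.smul_apply,
      EuclideanSpace.single_apply, smul_eq_mul]
    by_cases h : i = i₀
    · subst h; simp; ring
    · simp [h]
  -- formula for A
  have hAu : ∀ u : V d, A u = b • u + ((a - b) * ⟪e, u⟫) • e := by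
    intro u
    have h1 : (R u) i₀ = ⟪e, u⟫ := by
      have : ⟪E₀, R u⟫ = (R u) i₀ := by
        rw [hE₀, EuclideanSpace.inner_single_left]; simp
      rw [← this, ← hRe, LinearIsometryEquiv.inner_map_map]
    show Rl (D (Rl u)) = _
    rw [hRlapp, hRlapp, hDv, map_add, _root_.map_smul, _root_.map_smul, hRR, h1, hRE₀]
  -- determinant of A
  have hdetA : LinearMap.det A = a * b ^ (d - 1) := by
    have hRlRl : Rl ∘ₗ Rl = LinearMap.id := by
      apply LinearMap.ext; intro v; simp [hRlapp, hRR]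
    have h1 : LinearMap.det (Rl ∘ₗ Rl) = 1 := by rw [hRlRl, LinearMap.det_id]
    rw [LinearMap.det_comp] at h1
    have : LinearMap.det A = LinearMap.det Rl * LinearMap.det D * LinearMap.det Rl := by
      rw [hA, LinearMap.det_comp, LinearMap.det_comp]; ring
    rw [this, mul_comm, ← mul_assoc, h1, one_mul, hD, hw, det_dmap_ite]
  -- the determinant is large
  have hdet1 : 1 < |LinearMap.det A| := by
    have hber : 1 + ((d - 1 : ℕ) : ℝ) * (-(2*ε)) ≤ (1 + (-(2*ε))) ^ (d - 1) :=
      one_add_mul_le_pow (by nlinarith) (d - 1)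
    have hcast : ((d - 1 : ℕ) : ℝ) = (d : ℝ) - 1 := by
      rw [Nat.cast_sub hd]; norm_num
    rw [hcast] at hber
    have hb2d : (b ^ (d-1)) ^ 2 = (1 - 2*ε) ^ (d - 1) := by
      rw [← pow_mul, mul_comm, pow_mul, hb2]
    have hsq : 1 < (a * b ^ (d-1))^2 := by
      have h2 : 1 - 2*((d:ℝ)-1)*ε ≤ (1 - 2*ε) ^ (d-1) := by
        have h2' : (1 + -(2*ε) : ℝ) ^ (d-1) = (1 - 2*ε) ^ (d-1) := by
          rw [show (1 + -(2*ε) : ℝ) = 1 - 2*ε by ring]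
        linarith [hber, h2'.le, h2'.ge]
      have h3 : 1 < a^2 * (1 - 2*((d:ℝ)-1)*ε) := by
        have hkε : ((d:ℝ)-1)*ε ≤ 1/8 := by nlinarith
        have h34 : (0:ℝ) ≤ 1 - 2*(((d:ℝ)-1)*ε) := by linarith
        rw [ha, hγ]
        nlinarith [mul_pos hδ0 hεpos, mul_le_mul_of_nonneg_right hkmε hεpos.le,
          sq_nonneg ((s-1)*ε), mul_nonneg h34 (sq_nonneg ((s-1)*ε))]
      calc 1 < a^2 * (1 - 2*((d:ℝ)-1)*ε) := h3
      _ ≤ a^2 * ((1 - 2*ε) ^ (d-1)) := by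
          apply mul_le_mul_of_nonneg_left h2 (by positivity)
      _ = (a * b ^ (d-1))^2 := by rw [mul_pow, hb2d]
    have hpos : 0 < a * b ^ (d-1) := by positivity
    rw [hdetA, abs_of_pos hpos]
    nlinarith
  refine ⟨A, γ • e, ?_, hdet1⟩
  -- membership
  intro u hu
  rw [Metric.mem_closedBall, dist_zero_right] at hu
  set τ : ℝ := ⟪e, u⟫ with hτ
  have hτ1 : |τ| ≤ 1 := by
    calc |τ| ≤ ‖e‖ * ‖u‖ := abs_real_inner_le_norm e u
    _ ≤ 1 := by rw [hne, one_mul]; exact hu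
  have hτ1' : -1 ≤ τ := neg_le_of_abs_le hτ1
  have hτ1'' : τ ≤ 1 := le_of_abs_le hτ1
  set wv : V d := u - τ • e with hwv
  have hew : ⟪e, wv⟫ = 0 := by
    rw [hwv, inner_sub_right, real_inner_smul_right, real_inner_self_eq_norm_sq, hne]
    simp [hτ]
  have hu' : u = τ • e + wv := by rw [hwv]; abel
  have hwv2 : τ^2 + ‖wv‖^2 ≤ 1 := by
    have : ‖u‖^2 = ‖τ • e‖^2 + 2 * ⟪τ • e, wv⟫ + ‖wv‖^2 := by
      rw [hu'] ; exact norm_add_sq_real _ _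
    rw [real_inner_smul_left, hew, mul_zero, norm_smul, hne] at this
    have h4 : ‖u‖^2 ≤ 1 := by nlinarith [norm_nonneg u]
    simp only [Real.norm_eq_abs, mul_one, mul_zero, add_zero] at this
    nlinarith [sq_abs τ]
  set t : ℝ := ε * (1 + τ) with htdef
  have ht0 : 0 ≤ t := by nlinarith
  have ht1 : t ≤ 2 * ε := by nlinarith
  have htlt : t < 1 := by nlinarith
  have h1t : (0:ℝ) < 1 - t := by linarith
  -- the point decomposition
  have hz : A u + γ • e = (γ + a * τ) • e + b • wv := by
    rw [hAu, ← hτ, hu']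
    module
  have hz2 : (A u + γ • e) - t • y = (γ + a * τ - t * s) • e + b • wv := by
    rw [hz, hey]
    module
  have hnorm2 : ‖(A u + γ • e) - t • y‖^2 ≤ (1 - t)^2 := by
    rw [hz2]
    have hexp : ‖(γ + a * τ - t * s) • e + b • wv‖^2
        = (γ + a * τ - t * s)^2 + b^2 * ‖wv‖^2 := by
      have h1 : ⟪(γ + a * τ - t * s) • e, b • wv⟫ = 0 := by
        rw [real_inner_smul_left, real_inner_smul_right, hew]; ring
      have hsme : ‖(γ + a * τ - t * s) • e‖ = |γ + a * τ - t * s| := by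
        rw [norm_smul, hne, Real.norm_eq_abs, mul_one]
      rw [norm_add_sq_real, h1, hsme, norm_smul, Real.norm_eq_abs, mul_pow, sq_abs, sq_abs]
      ring
    rw [hexp]
    have hkey : (γ + a * τ - t * s)^2 + (1 - 2*ε) * (1 - τ^2) = (1-t)^2 := by
      rw [hγ, ha, htdef]; ring
    nlinarith [hb2, sq_nonneg b]
  set pt : V d := (1 - t)⁻¹ • ((A u + γ • e) - t • y) with hpt
  have hptn : ‖pt‖ ≤ 1 := by
    rw [hpt, norm_smul, norm_inv, Real.norm_eq_abs, abs_of_pos h1t]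
    rw [inv_mul_le_iff₀ h1t, mul_one]
    nlinarith [norm_nonneg ((A u + γ • e) - t • y)]
  have hdecomp : A u + γ • e = (1 - t) • pt + t • y := by
    rw [hpt, smul_inv_smul₀ h1t.ne']
    abel
  rw [hdecomp]
  exact hC (hB (by rw [Metric.mem_closedBall, dist_zero_right]; exact hptn)) hy
    h1t.le ht0 (by ring)

end Core
end JohnAux

namespace JohnAux

set_option maxHeartbeats 1000000 in
lemma exists_john {d : ℕ} (hd : 1 ≤ d) {K : Set (V d)} (hKconv : Convex ℝ K)
    (hKcl : IsClosed K) (hKbdd : Bornology.IsBounded K)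
    {x₀ : V d} {r₀ : ℝ} (hr₀ : 0 < r₀) (hball : Metric.closedBall x₀ r₀ ⊆ K) :
    ∃ (G : V d ≃ₗ[ℝ] V d) (v : V d),
      Metric.closedBall 0 1 ⊆ (fun x => G x + v) '' K ∧
      (fun x => G x + v) '' K ⊆ Metric.closedBall 0 d := by
  classical
  obtain ⟨Rb, hRb⟩ : ∃ R, K ⊆ Metric.closedBall 0 R := hKbdd.subset_closedBall 0
  have hx₀K : x₀ ∈ K := hball (Metric.mem_closedBall_self hr₀.le)
  have hRb0 : 0 ≤ Rb := by
    have := hRb hx₀K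
    rw [Metric.mem_closedBall] at this
    exact le_trans dist_nonneg this
  set S : Set ((V d →L[ℝ] V d) × V d) :=
    {p | ∀ u ∈ Metric.closedBall (0 : V d) 1, p.1 u + p.2 ∈ K} with hS
  have hSclosed : IsClosed S := by
    have : S = ⋂ u ∈ Metric.closedBall (0 : V d) 1,
        {p : (V d →L[ℝ] V d) × V d | p.1 u + p.2 ∈ K} := by
      ext p; simp [hS]
    rw [this]
    refine isClosed_biInter fun u hu => IsClosed.preimage ?_ hKcl
    exact ((ContinuousLinearMap.apply ℝ (V d) u).continuous.comp continuous_fst).add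
      continuous_snd
  have hSbdd : Bornology.IsBounded S := by
    have hsub : S ⊆ Metric.closedBall 0 (3 * Rb) := by
      intro p hp
      have hp2 : ‖p.2‖ ≤ Rb := by
        have h0 : p.1 0 + p.2 ∈ K := hp 0 (Metric.mem_closedBall_self zero_le_one)
        have := hRb h0
        rw [Metric.mem_closedBall, dist_zero_right] at this
        simpa using this
      have hp1 : ‖p.1‖ ≤ 2 * Rb := by
        refine ContinuousLinearMap.opNorm_le_bound _ (by linarith) fun u => ?_
        rcases eq_or_ne u 0 with rfl | hu0
        · simp
        · have hu' : ‖u‖⁻¹ • u ∈ Metric.closedBall (0 : V d) 1 := by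
            rw [Metric.mem_closedBall, dist_zero_right, norm_smul, norm_inv, norm_norm]
            rw [inv_mul_cancel₀ (norm_ne_zero_iff.2 hu0)]
          have hm := hRb (hp _ hu')
          rw [Metric.mem_closedBall, dist_zero_right] at hm
          have h1 : ‖p.1 (‖u‖⁻¹ • u)‖ ≤ 2 * Rb := by
            calc ‖p.1 (‖u‖⁻¹ • u)‖ ≤ ‖p.1 (‖u‖⁻¹ • u) + p.2‖ + ‖p.2‖ := by
                  have := norm_add_le (p.1 (‖u‖⁻¹ • u) + p.2) (-p.2)
                  simpa using this
            _ ≤ Rb + Rb := add_le_add hm hp2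
            _ = 2 * Rb := by ring
          have h2 : p.1 u = ‖u‖ • p.1 (‖u‖⁻¹ • u) := by
            rw [_root_.map_smul, smul_smul, mul_inv_cancel₀ (norm_ne_zero_iff.2 hu0), one_smul]
          rw [h2, norm_smul, norm_norm, mul_comm]
          exact mul_le_mul_of_nonneg_right h1 (norm_nonneg u)
      rw [Metric.mem_closedBall, dist_zero_right, Prod.norm_def]
      exact max_le (by linarith) (by linarith)
    exact Bornology.IsBounded.subset (Metric.isBounded_closedBall) hsub
  have hScompact : IsCompact S := Metric.isCompact_of_isClosed_isBounded hSclosed hSbdd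
  have hmem0 : ((r₀ • ContinuousLinearMap.id ℝ (V d) : V d →L[ℝ] V d), x₀) ∈ S := by
    intro u hu
    apply hball
    rw [Metric.mem_closedBall] at hu ⊢
    rw [dist_zero_right] at hu
    simp only [ContinuousLinearMap.smul_apply, ContinuousLinearMap.id_apply]
    rw [dist_eq_norm, add_sub_cancel_right, norm_smul, Real.norm_eq_abs, abs_of_pos hr₀]
    nlinarith [norm_nonneg u]
  have hSne : S.Nonempty := ⟨_, hmem0⟩
  have hcont : ContinuousOn (fun p : (V d →L[ℝ] V d) × V d => |ContinuousLinearMap.det p.1|) S :=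
    ((continuous_abs.comp (ContinuousLinearMap.continuous_det.comp continuous_fst)).continuousOn)
  obtain ⟨p, hpS, hpmax⟩ := hScompact.exists_isMaxOn hSne hcont
  have hpmax' : ∀ q ∈ S, |ContinuousLinearMap.det q.1| ≤ |ContinuousLinearMap.det p.1| :=
    fun q hq => hpmax hq
  have hdet0 : (0:ℝ) < |ContinuousLinearMap.det p.1| := by
    have h1 : |ContinuousLinearMap.det ((r₀ • ContinuousLinearMap.id ℝ (V d) : V d →L[ℝ] V d))|
        ≤ |ContinuousLinearMap.det p.1| := hpmax' _ hmem0
    have h2 : ContinuousLinearMap.det ((r₀ • ContinuousLinearMap.id ℝ (V d) : V d →L[ℝ] V d))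
        = r₀ ^ d := by
      have h3 : ((r₀ • ContinuousLinearMap.id ℝ (V d) : V d →L[ℝ] V d) : V d →ₗ[ℝ] V d)
          = r₀ • LinearMap.id := by
        ext u; simp
      rw [ContinuousLinearMap.det, h3, LinearMap.det_smul, LinearMap.det_id, mul_one,
        finrank_euclideanSpace_fin]
    rw [h2] at h1
    calc (0:ℝ) < r₀ ^ d := by positivity
    _ ≤ |r₀ ^ d| := le_abs_self _
    _ ≤ _ := h1
  have hdetne : LinearMap.det (p.1 : V d →ₗ[ℝ] V d) ≠ 0 := by
    intro h
    rw [ContinuousLinearMap.det, h, abs_zero] at hdet0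
    exact lt_irrefl _ hdet0
  set F : V d ≃ₗ[ℝ] V d := LinearMap.equivOfDetNeZero (p.1 : V d →ₗ[ℝ] V d) hdetne with hF
  have hFapp : ∀ x, F x = p.1 x := fun x => rfl
  refine ⟨F.symm, -(F.symm p.2), ?_, ?_⟩
  · intro u hu
    refine ⟨p.1 u + p.2, hpS u hu, ?_⟩
    show F.symm (p.1 u + p.2) + -(F.symm p.2) = u
    have h4 : F.symm (p.1 u + p.2) = F.symm (p.1 u) + F.symm p.2 := map_add _ _ _
    rw [h4, ← hFapp u, F.symm_apply_apply]
    abel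
  · rintro z ⟨x, hxK, rfl⟩
    rw [Metric.mem_closedBall, dist_zero_right]
    by_contra hcon
    push_neg at hcon
    set C : Set (V d) := (fun x => F.symm x + -(F.symm p.2)) '' K with hC
    have hBC : Metric.closedBall 0 1 ⊆ C := by
      intro u hu
      refine ⟨p.1 u + p.2, hpS u hu, ?_⟩
      show F.symm (p.1 u + p.2) + -(F.symm p.2) = u
      have h4 : F.symm (p.1 u + p.2) = F.symm (p.1 u) + F.symm p.2 := map_add _ _ _
      rw [h4, ← hFapp u, F.symm_apply_apply]
      abel
    have hCconv : Convex ℝ C := by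
      have h1 : Convex ℝ ((F.symm : V d →ₗ[ℝ] V d) '' K) := hKconv.linear_image _
      have h2 : C = (fun z => -(F.symm p.2) + z) '' ((F.symm : V d →ₗ[ℝ] V d) '' K) := by
        rw [hC, ← Set.image_comp]
        apply Set.image_congr
        intro x _
        show F.symm x + -(F.symm p.2) = -(F.symm p.2) + F.symm x
        abel
      rw [h2]
      exact h1.translate _
    have hyC : F.symm x + -(F.symm p.2) ∈ C := ⟨x, hxK, rfl⟩
    obtain ⟨A, c, hAmem, hAdet⟩ := john_core hd hCconv hBC hyC hcon
    set q : (V d →L[ℝ] V d) × V d :=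
      (p.1.comp (LinearMap.toContinuousLinearMap A), p.1 c + p.2) with hq
    have hqS : q ∈ S := by
      intro u hu
      obtain ⟨x', hx'K, hx'⟩ := hAmem u hu
      have h5 : p.1 (A u) + (p.1 c + p.2) = F (A u + c) + p.2 := by
        rw [← hFapp (A u), ← hFapp c, map_add F]; abel
      have h6 : F (A u + c) = x' - p.2 := by
        rw [← hx', map_add F, map_neg F, LinearEquiv.apply_symm_apply,
          LinearEquiv.apply_symm_apply]
        abel
      show p.1 ((LinearMap.toContinuousLinearMap A) u) + (p.1 c + p.2) ∈ K
      have h7 : (LinearMap.toContinuousLinearMap A) u = A u := rfl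
      rw [h7, h5, h6, sub_add_cancel]
      exact hx'K
    have h8 : |ContinuousLinearMap.det q.1| ≤ |ContinuousLinearMap.det p.1| := hpmax' _ hqS
    have h9 : ContinuousLinearMap.det q.1 = ContinuousLinearMap.det p.1 * LinearMap.det A := by
      show LinearMap.det ((p.1.comp (LinearMap.toContinuousLinearMap A)
        : V d →L[ℝ] V d) : V d →ₗ[ℝ] V d) = _
      rw [ContinuousLinearMap.toLinearMap_comp, LinearMap.det_comp, LinearMap.coe_toContinuousLinearMap]
    rw [h9, abs_mul] at h8
    nlinarith [hdet0, hAdet, h8]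

end JohnAux

namespace JohnAux

variable {d : ℕ}

/-- squash weights -/
def wt (hd : 1 ≤ d) (t : ℝ) : Fin d → ℝ := fun i => if i = ⟨0, hd⟩ then t else 1

lemma coord_le_norm (x : V d) (i : Fin d) : |x i| ≤ ‖x‖ := by
  have h := abs_real_inner_le_norm (EuclideanSpace.single i (1:ℝ)) x
  rw [EuclideanSpace.inner_single_left, EuclideanSpace.norm_single] at h
  simpa using h

lemma vol_lin (e : V d ≃ₗ[ℝ] V d) (s : Set (V d)) :
    volume (⇑e '' s) = ENNReal.ofReal |LinearMap.det (e : V d →ₗ[ℝ] V d)| * volume s := by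
  have h := MeasureTheory.Measure.addHaar_image_linearMap (volume)
    (e : V d →ₗ[ℝ] V d) s
  simpa using h

lemma isometry_translate (v : V d) : Isometry (fun x : V d => x + v) :=
  Isometry.of_dist_eq fun a b => by simp [dist_eq_norm]

lemma vol_translate (v : V d) (s : Set (V d)) :
    volume ((fun x : V d => x + v) '' s) = volume s := by
  rw [Set.image_add_right]
  exact measure_preimage_add_right volume (-v) s

lemma diam_image_le {f g : V d → V d} {S : Set (V d)}
    (hb : Bornology.IsBounded (g '' S)) {δ : ℝ} (hδ : 0 ≤ δ)
    (h : ∀ x ∈ S, dist (f x) (g x) ≤ δ) :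
    Metric.diam (f '' S) ≤ Metric.diam (g '' S) + 2 * δ := by
  apply Metric.diam_le_of_forall_dist_le
    (add_nonneg Metric.diam_nonneg (by linarith))
  rintro _ ⟨x, hx, rfl⟩ _ ⟨y, hy, rfl⟩
  calc dist (f x) (f y) ≤ dist (f x) (g x) + dist (g x) (g y) + dist (g y) (f y) :=
        dist_triangle4 _ _ _ _
  _ ≤ δ + Metric.diam (g '' S) + δ := by
      refine add_le_add (add_le_add (h x hx) ?_) ?_
      · exact Metric.dist_le_diam_of_mem hb ⟨x, hx, rfl⟩ ⟨y, hy, rfl⟩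
      · rw [dist_comm]; exact h y hy
  _ = Metric.diam (g '' S) + 2 * δ := by ring

end JohnAux

namespace JohnAux

set_option maxHeartbeats 2000000 in
theorem john_main
    (d : ℕ) (hd : 1 ≤ d) (Q : Set (EuclideanSpace ℝ (Fin d)))
    (hQne : Q.Nonempty) (hQconv : Convex ℝ Q) (hQopen : IsOpen Q)
    (hQbdd : Bornology.IsBounded Q) :
    ∃ Ψ : EuclideanSpace ℝ (Fin d) ≃ₗ[ℝ] EuclideanSpace ℝ (Fin d),
      (volume (Metric.ball (0 : EuclideanSpace ℝ (Fin d)) 1)).toReal / (2 ^ d * (d : ℝ) ^ d)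
          ≤ (volume (Ψ '' Q)).toReal / Metric.diam (Ψ '' Q) ^ d ∧
        (volume (Ψ '' Q)).toReal / Metric.diam (Ψ '' Q) ^ d ≤
          (volume (Metric.ball (0 : EuclideanSpace ℝ (Fin d)) 1)).toReal /
            (2 : ℝ) ^ ((d : ℝ) / 2) := by
  classical
  set K : Set (V d) := closure Q with hK
  have hKconv : Convex ℝ K := hQconv.closure
  have hKcl : IsClosed K := isClosed_closure
  have hKbdd : Bornology.IsBounded K := hQbdd.closure
  obtain ⟨x₀, hx₀⟩ := hQne
  obtain ⟨r₁, hr₁, hball₁⟩ := Metric.isOpen_iff.1 hQopen x₀ hx₀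
  have hball : Metric.closedBall x₀ (r₁/2) ⊆ K :=
    (Metric.closedBall_subset_ball (by linarith)).trans (hball₁.trans subset_closure)
  obtain ⟨G, v, hlow, hup⟩ := exists_john hd hKconv hKcl hKbdd (by linarith : 0 < r₁/2) hball
  set K'' : Set (V d) := (fun x => G x + v) '' K with hK''
  -- basic volume facts
  have hQvol : volume Q = volume K := by
    refine le_antisymm (measure_mono subset_closure) ?_
    calc volume K ≤ volume (Q ∪ frontier Q) := by
          rw [hK]; exact measure_mono (by rw [← closure_eq_self_union_frontier])
    _ ≤ volume Q + volume (frontier Q) := measure_union_le _ _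
    _ = volume Q := by rw [hQconv.addHaar_frontier volume, add_zero]
  have hK''vol : volume K'' = ENNReal.ofReal |LinearMap.det (G : V d →ₗ[ℝ] V d)| * volume Q := by
    rw [hK'']
    have h1 : (fun x : V d => G x + v) '' K = (fun z : V d => z + v) '' (⇑G '' K) := by
      rw [Set.image_image]
    rw [h1, vol_translate, vol_lin, hQvol]
  have hK''fin : volume K'' < ⊤ :=
    lt_of_le_of_lt (measure_mono hup) measure_closedBall_lt_top
  set τ : ℝ := (volume (Metric.ball (0 : V d) 1)).toReal with hτ
  set vK : ℝ := (volume K'').toReal with hvK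
  have hτpos : 0 < τ := by
    rw [hτ]
    exact ENNReal.toReal_pos (Metric.measure_ball_pos volume 0 one_pos).ne' measure_ball_lt_top.ne
  have hτvK : τ ≤ vK := by
    rw [hτ, hvK]
    refine ENNReal.toReal_le_toReal measure_ball_lt_top.ne hK''fin.ne |>.2 ?_
    exact le_trans (measure_mono Metric.ball_subset_closedBall) (measure_mono hlow)
  have hvKpos : 0 < vK := lt_of_lt_of_le hτpos hτvK
  have hvKle : vK ≤ (d : ℝ) ^ d * τ := by
    have h1 : volume K'' ≤ volume (Metric.closedBall (0 : V d) d) := measure_mono hup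
    rw [Measure.addHaar_closedBall volume 0 (by positivity : (0:ℝ) ≤ (d:ℝ)),
      finrank_euclideanSpace_fin] at h1
    rw [hvK, hτ]
    calc (volume K'').toReal ≤ (ENNReal.ofReal ((d:ℝ) ^ d) * volume (Metric.ball (0:V d) 1)).toReal := by
          refine ENNReal.toReal_le_toReal hK''fin.ne ?_ |>.2 h1
          exact (ENNReal.mul_lt_top ENNReal.ofReal_lt_top measure_ball_lt_top).ne
    _ = (d : ℝ) ^ d * (volume (Metric.ball (0:V d) 1)).toReal := by
          rw [ENNReal.toReal_mul, ENNReal.toReal_ofReal (by positivity)]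
  have hK''bdd : Bornology.IsBounded K'' := Metric.isBounded_closedBall.subset hup
  have hdiamK2 : 2 ≤ Metric.diam K'' := by
    set E₀ : V d := EuclideanSpace.single ⟨0, hd⟩ (1:ℝ) with hE₀
    have hE₀n : ‖E₀‖ = 1 := by rw [hE₀, EuclideanSpace.norm_single]; norm_num
    have h1 : E₀ ∈ K'' := hlow (by rw [Metric.mem_closedBall, dist_zero_right, hE₀n])
    have h2 : -E₀ ∈ K'' := hlow (by rw [Metric.mem_closedBall, dist_zero_right, norm_neg, hE₀n])
    have h3 : dist E₀ (-E₀) = 2 := by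
      rw [dist_eq_norm, sub_neg_eq_add, ← two_smul ℝ E₀, norm_smul, hE₀n]
      norm_num
    calc (2:ℝ) = dist E₀ (-E₀) := h3.symm
    _ ≤ Metric.diam K'' := Metric.dist_le_diam_of_mem hK''bdd h1 h2
  have hdiamKle : Metric.diam K'' ≤ 2 * d := by
    calc Metric.diam K'' ≤ Metric.diam (Metric.closedBall (0:V d) d) :=
          Metric.diam_mono hup Metric.isBounded_closedBall
    _ ≤ 2 * d := Metric.diam_closedBall (by positivity)
  -- the squash family
  set Dm : ℝ → ℝ := fun t => Metric.diam ((dmap (wt hd t)) '' K'') with hDm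
  have hwt1 : ∀ x : V d, dmap (wt hd 1) x = x := by
    intro x; ext i
    simp only [dmap_apply, wt]
    split_ifs <;> simp
  have hDm1 : Dm 1 = Metric.diam K'' := by
    show Metric.diam ((dmap (wt hd 1)) '' K'') = Metric.diam K''
    have : (dmap (wt hd 1)) '' K'' = K'' := by
      have h1 : ⇑(dmap (wt hd 1)) = id := funext fun x => hwt1 x
      rw [h1, Set.image_id]
    rw [this]
  have hnorm_dmap : ∀ t : ℝ, |t| ≤ 1 → ∀ x : V d, ‖dmap (wt hd t) x‖ ≤ ‖x‖ := by
    intro t ht x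
    rw [EuclideanSpace.norm_eq, EuclideanSpace.norm_eq]
    apply Real.sqrt_le_sqrt
    apply Finset.sum_le_sum
    intro i _
    simp only [dmap_apply, wt]
    split_ifs with h
    · rw [Real.norm_eq_abs, Real.norm_eq_abs, abs_mul]
      have := abs_nonneg (x i)
      nlinarith [abs_nonneg (t * x i), abs_nonneg (x i), sq_abs (t * x i), sq_abs (x i),
        abs_mul t (x i), mul_le_mul_of_nonneg_right ht (abs_nonneg (x i))]
    · simp
  have himg_sub : ∀ t : ℝ, |t| ≤ 1 → (dmap (wt hd t)) '' K'' ⊆ Metric.closedBall 0 d := by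
    intro t ht
    rintro _ ⟨x, hx, rfl⟩
    rw [Metric.mem_closedBall, dist_zero_right]
    have h1 := hnorm_dmap t ht x
    have h2 := hup hx
    rw [Metric.mem_closedBall, dist_zero_right] at h2
    linarith
  have hdist_pt : ∀ t t' : ℝ, ∀ x ∈ K'',
      dist (dmap (wt hd t) x) (dmap (wt hd t') x) ≤ |t - t'| * d := by
    intro t t' x hx
    have h2 := hup hx
    rw [Metric.mem_closedBall, dist_zero_right] at h2
    have h3 : dmap (wt hd t) x - dmap (wt hd t') x
        = EuclideanSpace.single (⟨0, hd⟩ : Fin d) ((t - t') * x ⟨0, hd⟩) := by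
      ext i
      simp only [PiLp.sub_apply, dmap_apply, wt, EuclideanSpace.single_apply]
      split_ifs with h
      · subst h; ring
      · ring
    rw [dist_eq_norm, h3, EuclideanSpace.norm_single, Real.norm_eq_abs, abs_mul]
    have h4 : |x ⟨0, hd⟩| ≤ (d:ℝ) := le_trans (coord_le_norm x _) h2
    exact mul_le_mul_of_nonneg_left h4 (abs_nonneg _) |>.trans
      (le_of_eq rfl)
  have hDmLip : ∀ t ∈ Icc (0:ℝ) 1, ∀ t' ∈ Icc (0:ℝ) 1,
      dist (Dm t) (Dm t') ≤ 2 * d * dist t t' := by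
    intro t ht t' ht'
    have habs : ∀ r ∈ Icc (0:ℝ) 1, |r| ≤ 1 := by
      intro r hr; rw [abs_le]; exact ⟨by linarith [hr.1], hr.2⟩
    have hδ : (0:ℝ) ≤ |t - t'| * d := by positivity
    have h1 : Dm t ≤ Dm t' + 2 * (|t - t'| * d) :=
      diam_image_le (Metric.isBounded_closedBall.subset (himg_sub t' (habs t' ht')))
        hδ (fun x hx => hdist_pt t t' x hx)
    have h2 : Dm t' ≤ Dm t + 2 * (|t - t'| * d) := by
      refine diam_image_le (Metric.isBounded_closedBall.subset (himg_sub t (habs t ht)))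
        hδ (fun x hx => ?_)
      have := hdist_pt t' t x hx
      rwa [abs_sub_comm] at this
    rw [Real.dist_eq, Real.dist_eq, abs_le]
    constructor <;> nlinarith
  have hDmcont : ContinuousOn Dm (Icc (0:ℝ) 1) := by
    refine LipschitzOnWith.continuousOn (K := ⟨2 * d, by positivity⟩) ?_
    apply LipschitzOnWith.of_dist_le_mul
    intro t ht t' ht'
    exact hDmLip t ht t' ht'
  have hvol_im : ∀ t : ℝ, 0 ≤ t →
      volume ((dmap (wt hd t)) '' K'') = ENNReal.ofReal t * volume K'' := by
    intro t ht
    rw [Measure.addHaar_image_linearMap]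
    congr 1
    have : LinearMap.det (dmap (wt hd t)) = t * 1 ^ (d-1) := det_dmap_ite _ _ _
    rw [this, one_pow, mul_one, abs_of_nonneg ht]
  -- Dm is at least 2 when d ≥ 2
  have hDm2 : 2 ≤ d → ∀ t ∈ Icc (0:ℝ) 1, 2 ≤ Dm t := by
    intro hd2 t ht
    have habs : |t| ≤ 1 := by rw [abs_le]; exact ⟨by linarith [ht.1], ht.2⟩
    set E₁ : V d := EuclideanSpace.single ⟨1, hd2⟩ (1:ℝ) with hE₁
    have hE₁n : ‖E₁‖ = 1 := by rw [hE₁, EuclideanSpace.norm_single]; norm_num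
    have hfix : dmap (wt hd t) E₁ = E₁ := by
      ext i
      simp only [dmap_apply, wt, hE₁, EuclideanSpace.single_apply]
      by_cases h1 : i = ⟨1, hd2⟩
      · have h2 : i ≠ ⟨0, hd⟩ := by subst h1; simp [Fin.ext_iff]
        rw [if_neg h2, if_pos h1, one_mul]
      · rw [if_neg h1, mul_zero]
    have hm1 : E₁ ∈ K'' := hlow (by rw [Metric.mem_closedBall, dist_zero_right, hE₁n])
    have hm2 : -E₁ ∈ K'' := hlow (by rw [Metric.mem_closedBall, dist_zero_right, norm_neg, hE₁n])
    have hi1 : E₁ ∈ (dmap (wt hd t)) '' K'' := ⟨E₁, hm1, hfix⟩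
    have hi2 : -E₁ ∈ (dmap (wt hd t)) '' K'' := ⟨-E₁, hm2, by rw [map_neg, hfix]⟩
    have h3 : dist E₁ (-E₁) = 2 := by
      rw [dist_eq_norm, sub_neg_eq_add, ← two_smul ℝ E₁, norm_smul, hE₁n]
      norm_num
    calc (2:ℝ) = dist E₁ (-E₁) := h3.symm
    _ ≤ Dm t := Metric.dist_le_diam_of_mem
        (Metric.isBounded_closedBall.subset (himg_sub t habs)) hi1 hi2
  set L : ℝ := τ / (2 ^ d * (d : ℝ) ^ d) with hLdef
  have hLpos : 0 < L := by
    rw [hLdef]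
    have hd0 : (0:ℝ) < (d:ℝ) := by exact_mod_cast hd
    positivity
  have hdiamKpos : (0:ℝ) < Metric.diam K'' := by linarith
  have hρ1 : L ≤ (1 * vK) / (Dm 1) ^ d := by
    rw [one_mul, hDm1, hLdef, div_le_div_iff₀ (by positivity) (by positivity)]
    have hdpow : Metric.diam K'' ^ d ≤ (2 * (d:ℝ)) ^ d :=
      pow_le_pow_left₀ hdiamKpos.le hdiamKle d
    calc τ * Metric.diam K'' ^ d ≤ vK * ((2 * (d:ℝ)) ^ d) :=
          mul_le_mul hτvK hdpow (by positivity) hvKpos.le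
    _ = vK * (2 ^ d * (d:ℝ) ^ d) := by rw [mul_pow]
  have hLU : L ≤ τ / (2:ℝ) ^ ((d:ℝ)/2) := by
    have hd0 : (1:ℝ) ≤ (d:ℝ) := by exact_mod_cast hd
    have h7 : (2:ℝ) ^ ((d:ℝ)/2) ≤ (2:ℝ) ^ ((d:ℝ)) :=
      Real.rpow_le_rpow_of_exponent_le one_le_two (by linarith)
    have h8 : (2:ℝ) ^ ((d:ℝ)) = 2 ^ d := Real.rpow_natCast 2 d
    have h9 : (2:ℝ) ^ d ≤ 2 ^ d * (d:ℝ) ^ d :=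
      le_mul_of_one_le_right (by positivity) (one_le_pow₀ hd0)
    rw [hLdef]
    exact div_le_div_of_nonneg_left hτpos.le (by positivity) (by linarith [h8 ▸ h7])
  obtain ⟨tstar, htpos, ht1, hlowf, hupf⟩ :
      ∃ t : ℝ, 0 < t ∧ t ≤ 1 ∧ L ≤ (t * vK) / (Dm t) ^ d ∧
        (t * vK) / (Dm t) ^ d ≤ τ / (2:ℝ) ^ ((d:ℝ)/2) := by
    rcases eq_or_lt_of_le hd with hd1 | hd2
    · -- d = 1
      refine ⟨1, one_pos, le_refl 1, hρ1, ?_⟩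
      rw [one_mul, hDm1]
      have hdd : ((d:ℝ)) ^ d = 1 := by rw [← hd1]; norm_num
      have h1 : vK ≤ τ := by rw [hdd, one_mul] at hvKle; exact hvKle
      have h2 : vK / Metric.diam K'' ^ d ≤ τ / 2 ^ d := by
        rw [div_le_div_iff₀ (by positivity) (by positivity)]
        have h3 : (2:ℝ) ^ d ≤ Metric.diam K'' ^ d := pow_le_pow_left₀ (by norm_num) hdiamK2 d
        exact mul_le_mul h1 h3 (by positivity) hτpos.le
      refine h2.trans ?_
      have h7 : (2:ℝ) ^ ((d:ℝ)/2) ≤ (2:ℝ) ^ ((d:ℝ)) := by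
        apply Real.rpow_le_rpow_of_exponent_le one_le_two
        have : (0:ℝ) ≤ (d:ℝ) := by positivity
        linarith
      have h8 : (2:ℝ) ^ ((d:ℝ)) = 2 ^ d := Real.rpow_natCast 2 d
      exact div_le_div_of_nonneg_left hτpos.le (by positivity) (by linarith [h8 ▸ h7])
    · -- d ≥ 2
      have hd2' : 2 ≤ d := hd2
      set t₀ : ℝ := min 1 (L * 2 ^ d / vK) with ht₀
      have ht₀pos : 0 < t₀ := lt_min one_pos (by positivity)
      have ht₀le1 : t₀ ≤ 1 := min_le_left _ _
      have hsub : Icc t₀ 1 ⊆ Icc (0:ℝ) 1 := Icc_subset_Icc ht₀pos.le le_rfl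
      have hcont : ContinuousOn (fun t => (t * vK) / (Dm t) ^ d) (Icc t₀ 1) := by
        apply ContinuousOn.div
        · exact (continuous_id.mul continuous_const).continuousOn
        · exact (hDmcont.mono hsub).pow d
        · intro t ht
          have h2 := hDm2 hd2' t (hsub ht)
          positivity
      have hρt₀ : (t₀ * vK) / (Dm t₀) ^ d ≤ L := by
        have h2 : 2 ≤ Dm t₀ := hDm2 hd2' t₀ ⟨ht₀pos.le, ht₀le1⟩
        have h3 : (2:ℝ) ^ d ≤ (Dm t₀) ^ d := pow_le_pow_left₀ (by norm_num) h2 d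
        have h4 : (t₀ * vK) / (Dm t₀) ^ d ≤ (t₀ * vK) / 2 ^ d :=
          div_le_div_of_nonneg_left (by positivity) (by positivity) h3
        have h5 : t₀ ≤ L * 2 ^ d / vK := min_le_right _ _
        have h6 : t₀ * vK ≤ L * 2 ^ d := by
          calc t₀ * vK ≤ (L * 2 ^ d / vK) * vK := mul_le_mul_of_nonneg_right h5 hvKpos.le
          _ = L * 2 ^ d := div_mul_cancel₀ _ hvKpos.ne'
        calc (t₀ * vK) / (Dm t₀) ^ d ≤ (t₀ * vK) / 2 ^ d := h4
        _ ≤ (L * 2 ^ d) / 2 ^ d := by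
            exact (div_le_div_iff_of_pos_right (by positivity)).2 h6
        _ = L := by field_simp
      have hIVT := intermediate_value_Icc ht₀le1 hcont
      have hLmem : L ∈ Icc ((t₀ * vK) / (Dm t₀) ^ d) ((1 * vK) / (Dm 1) ^ d) := ⟨hρt₀, hρ1⟩
      obtain ⟨t, htmem, htval⟩ := hIVT hLmem
      exact ⟨t, lt_of_lt_of_le ht₀pos htmem.1, htmem.2, le_of_eq htval.symm,
        le_trans (le_of_eq htval) hLU⟩
  -- construct the final linear equivalence
  have hwne : ∀ i, wt hd tstar i ≠ 0 := by
    intro i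
    simp only [wt]
    split_ifs
    · exact htpos.ne'
    · exact one_ne_zero
  set T : V d ≃ₗ[ℝ] V d := dequiv (wt hd tstar) hwne with hT
  set Ψ : V d ≃ₗ[ℝ] V d := G.trans T with hΨdef
  have hΨfun : ⇑Ψ = fun x => dmap (wt hd tstar) (G x) := funext fun x => rfl
  have himQ : ⇑Ψ '' Q = ⇑(dmap (wt hd tstar)) '' (⇑G '' Q) := by
    rw [Set.image_image, hΨfun]
  have hvolQ : (volume (⇑Ψ '' Q)).toReal = tstar * vK := by
    rw [himQ, Measure.addHaar_image_linearMap]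
    have hdet : LinearMap.det (dmap (wt hd tstar)) = tstar * 1 ^ (d-1) := det_dmap_ite _ _ _
    rw [hdet, one_pow, mul_one, abs_of_nonneg htpos.le, vol_lin G Q, ← hK''vol,
      ENNReal.toReal_mul, ENNReal.toReal_ofReal htpos.le, ← hvK]
  have hdiamQ : Metric.diam (⇑Ψ '' Q) = Dm tstar := by
    have hhomeo : closure (⇑Ψ '' Q) = ⇑Ψ '' K := by
      rw [hK]
      exact (Homeomorph.image_closure (Ψ.toContinuousLinearEquiv.toHomeomorph) Q).symm
    have h3 : ⇑Ψ '' K = ⇑(dmap (wt hd tstar)) '' (⇑G '' K) := by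
      rw [Set.image_image, hΨfun]
    have h4 : (⇑(dmap (wt hd tstar))) '' K'' =
        (fun z : V d => z + dmap (wt hd tstar) v) '' (⇑(dmap (wt hd tstar)) '' (⇑G '' K)) := by
      rw [hK'', Set.image_image, Set.image_image, Set.image_image]
      apply Set.image_congr
      intro x _
      exact map_add _ _ _
    have h5 : Dm tstar = Metric.diam (⇑(dmap (wt hd tstar)) '' (⇑G '' K)) := by
      show Metric.diam ((dmap (wt hd tstar)) '' K'') = _
      rw [h4, (isometry_translate _).diam_image]
    rw [← Metric.diam_closure, hhomeo, h3, ← h5]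
  refine ⟨Ψ, ?_, ?_⟩
  · rw [hvolQ, hdiamQ]; exact hlowf
  · rw [hvolQ, hdiamQ]; exact hupf

end JohnAux

/-- **Corollary of John's ellipsoid theorem** (Proposition 4.4 / `prop:John`).
For every non-empty convex open bounded `Q ⊆ ℝ^d` there is a linear bijection
`Ψ : ℝ^d → ℝ^d` with `τ_d/(2^d d^d) ≤ |Ψ(Q)|/(diam Ψ(Q))^d ≤ τ_d/2^{d/2}`,
where `τ_d` is the volume of the Euclidean unit ball. -/
theorem john_quotient_bound
    (d : ℕ) (hd : 1 ≤ d) (Q : Set (EuclideanSpace ℝ (Fin d)))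
    (hQne : Q.Nonempty) (hQconv : Convex ℝ Q) (hQopen : IsOpen Q)
    (hQbdd : Bornology.IsBounded Q) :
    ∃ Ψ : EuclideanSpace ℝ (Fin d) ≃ₗ[ℝ] EuclideanSpace ℝ (Fin d),
      (volume (Metric.ball (0 : EuclideanSpace ℝ (Fin d)) 1)).toReal / (2 ^ d * (d : ℝ) ^ d)
          ≤ (volume (Ψ '' Q)).toReal / Metric.diam (Ψ '' Q) ^ d ∧
        (volume (Ψ '' Q)).toReal / Metric.diam (Ψ '' Q) ^ d ≤
          (volume (Metric.ball (0 : EuclideanSpace ℝ (Fin d)) 1)).toReal /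
            (2 : ℝ) ^ ((d : ℝ) / 2) := by
  exact JohnAux.john_main d hd Q hQne hQconv hQopen hQbdd
end
end

section
/- Let d ≥ 1 and let Q ⊆ ℝ^d be a non-empty, convex, open, bounded set which is centrally symmetric, i.e., there exists x₀ ∈ Q such that x₀ + x ∈ Q implies x₀ − x ∈ Q. Then there exists a linear bijection Ψ : ℝ^d → ℝ^d such that τ_d / (4d)^{d/2} ≤ |Ψ(Q)| / (diam Ψ(Q))^d ≤ τ_d / 2^{d/2}. -/
open MeasureTheory Real Set
open scoped BigOperators ENNReal RealInnerProductSpace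

noncomputable section

section JohnAux

open Metric



lemma ellipse_support {a b R t N : ℝ} (ha : 1 ≤ a) (haR : a ≤ R) (hR : 1 < R)
    (hb : 0 ≤ b) (hcon : b^2*(R^2-1) ≤ R^2 - a^2) (ht : t^2 ≤ N^2) :
    b^2*N^2 + (a^2-b^2)*t^2 ≤ max (N^2) (R^2*t^2) := by
  have hR1 : 1 < R^2 := by nlinarith
  have hb2 : b^2 ≤ 1 := by nlinarith
  rcases le_total (R^2*t^2) (N^2) with h | h
  · rw [max_eq_left h]
    rcases le_total (b^2) (a^2) with h2 | h2
    · nlinarith [sq_nonneg t, sq_nonneg b]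
    · nlinarith [sq_nonneg t, sq_nonneg N]
  · rw [max_eq_right h]
    rcases le_total (b^2) (a^2) with h2 | h2
    · nlinarith [sq_nonneg t, sq_nonneg b, sq_nonneg N]
    · nlinarith [sq_nonneg t, sq_nonneg N]

lemma exists_ab (d : ℕ) (hd : 1 ≤ d) {R : ℝ} (hR0 : 0 < R) (hR2 : (d:ℝ) < R^2) :
    ∃ a b : ℝ, 1 ≤ a ∧ 0 < b ∧ a ≤ R ∧ b^2*(R^2-1) ≤ R^2 - a^2 ∧ 1 < a * b^(d-1) := by
  have hd1 : (1:ℝ) ≤ (d:ℝ) := by exact_mod_cast hd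
  have hR1 : 1 < R^2 := lt_of_le_of_lt hd1 hR2
  set c : ℝ := ((d:ℝ)-1)/(R^2-1) with hc
  have hRpos : (0:ℝ) < R^2 - 1 := by linarith
  have hc0 : 0 ≤ c := div_nonneg (by linarith) hRpos.le
  have hc1 : c < 1 := (div_lt_one hRpos).2 (by linarith)
  set ε : ℝ := min ((1-c)/2) ((R^2-1)/2) with hε
  have hε0 : 0 < ε := lt_min (by linarith) (by linarith)
  have hε1 : ε ≤ (1-c)/2 := min_le_left _ _
  have hε2 : ε ≤ (R^2-1)/2 := min_le_right _ _
  have ha2pos : (0:ℝ) < 1 + ε := by linarith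
  have hb2pos : (0:ℝ) < 1 - ε/(R^2-1) := by
    rw [sub_pos, div_lt_one hRpos]; linarith
  have hsa := Real.sq_sqrt ha2pos.le
  have hsb := Real.sq_sqrt hb2pos.le
  have hsa0 := Real.sqrt_nonneg (1+ε)
  have hsb0 := Real.sqrt_nonneg (1 - ε/(R^2-1))
  refine ⟨Real.sqrt (1+ε), Real.sqrt (1 - ε/(R^2-1)), ?_, ?_, ?_, ?_, ?_⟩
  · nlinarith
  · exact Real.sqrt_pos.2 hb2pos
  · nlinarith
  · rw [hsa, hsb]
    have : (1 - ε/(R^2-1)) * (R^2-1) = R^2 - 1 - ε := by field_simp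
    rw [this]; linarith
  · have key : 1 < (1+ε) * (1 - ε/(R^2-1))^(d-1) := by
      have h2 : (-2:ℝ) ≤ -(ε/(R^2-1)) := by
        have : ε/(R^2-1) ≤ 1/2 := by
          rw [div_le_div_iff₀ hRpos (by norm_num : (0:ℝ)<2)]; linarith
        linarith
      have hcast : ((d-1 : ℕ):ℝ) = (d:ℝ)-1 := by
        have := Nat.cast_sub hd (R := ℝ); simpa using this
      have hber : 1 - ((d:ℝ)-1) * (ε/(R^2-1)) ≤ (1 - ε/(R^2-1))^(d-1) := by
        calc 1 - ((d:ℝ)-1)*(ε/(R^2-1)) = 1 + ((d-1:ℕ):ℝ) * (-(ε/(R^2-1))) := by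
              rw [hcast]; ring
          _ ≤ (1 + -(ε/(R^2-1)))^(d-1) := one_add_mul_le_pow h2 (d-1)
          _ = (1 - ε/(R^2-1))^(d-1) := by ring_nf
      have hcε : ((d:ℝ)-1) * (ε/(R^2-1)) = c * ε := by rw [hc]; ring
      have h1 : (1+ε) * (1 - c*ε) ≤ (1+ε) * (1 - ε/(R^2-1))^(d-1) := by
        apply mul_le_mul_of_nonneg_left _ ha2pos.le
        rw [← hcε]; exact hber
      have hce : c*ε ≤ (1-c)/2 :=
        le_trans (mul_le_mul_of_nonneg_left hε1 hc0) (by nlinarith)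
      have h2' : 1 < (1+ε)*(1-c*ε) := by
        nlinarith [mul_pos hε0 (show 0 < 1 - c - c*ε by linarith)]
      linarith
    set x := Real.sqrt (1+ε) * Real.sqrt (1 - ε/(R^2-1)) ^ (d-1) with hx
    have hx0 : 0 ≤ x := mul_nonneg hsa0 (pow_nonneg hsb0 _)
    have hxsq : x^2 = (1+ε) * (1 - ε/(R^2-1))^(d-1) := by
      rw [hx, mul_pow, ← pow_mul, mul_comm (d-1) 2, pow_mul, hsa, hsb]
    have h3 : 1 < x^2 := hxsq ▸ key
    exact (one_lt_pow_iff_of_nonneg hx0 two_ne_zero).1 h3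


variable {d : ℕ}

noncomputable def Smap (a b : ℝ) (v : EuclideanSpace ℝ (Fin d)) :
    EuclideanSpace ℝ (Fin d) →L[ℝ] EuclideanSpace ℝ (Fin d) :=
  b • ContinuousLinearMap.id ℝ _ + (a-b) • ((innerSL ℝ v).smulRight v)

lemma Smap_apply (a b : ℝ) (v x : EuclideanSpace ℝ (Fin d)) :
    Smap a b v x = b • x + ((a-b) * ⟪v, x⟫) • v := by
  simp [Smap, smul_smul]

lemma Smap_inner (a b : ℝ) (v x u : EuclideanSpace ℝ (Fin d)) :
    ⟪u, Smap a b v x⟫ = ⟪Smap a b v u, x⟫ := by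
  simp only [Smap_apply, inner_add_left, inner_add_right, real_inner_smul_left,
    real_inner_smul_right]
  rw [real_inner_comm u v]
  ring

lemma Smap_norm_sq (a b : ℝ) (v w : EuclideanSpace ℝ (Fin d)) (hv : ‖v‖ = 1) :
    ‖Smap a b v w‖^2 = b^2*‖w‖^2 + (a^2-b^2)*⟪v,w⟫^2 := by
  have hvv : ⟪v,v⟫ = 1 := by
    rw [real_inner_self_eq_norm_sq, hv]; norm_num
  rw [← real_inner_self_eq_norm_sq, ← real_inner_self_eq_norm_sq]
  simp only [Smap_apply, inner_add_left, inner_add_right, real_inner_smul_left,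
    real_inner_smul_right, hvv]
  rw [real_inner_comm w v]
  ring

lemma det_Smap (hd : 1 ≤ d) (a b : ℝ) (v : EuclideanSpace ℝ (Fin d)) (hv : ‖v‖ = 1) :
    LinearMap.det ((Smap a b v : EuclideanSpace ℝ (Fin d) →L[ℝ] EuclideanSpace ℝ (Fin d)) :
      EuclideanSpace ℝ (Fin d) →ₗ[ℝ] EuclideanSpace ℝ (Fin d)) = a * b^(d-1) := by
  set i₀ : Fin d := ⟨0, hd⟩ with hi₀
  have hcard : Module.finrank ℝ (EuclideanSpace ℝ (Fin d)) = Fintype.card (Fin d) := by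
    simp [finrank_euclideanSpace_fin]
  have horth : Orthonormal ℝ (Set.restrict {i₀} (fun _ : Fin d => v)) := by
    constructor
    · intro i; exact hv
    · intro i j hij
      exfalso
      apply hij
      ext
      have h1 := i.2; have h2 := j.2
      simp only [Set.mem_singleton_iff] at h1 h2
      rw [h1, h2]
  obtain ⟨B, hB⟩ := horth.exists_orthonormalBasis_extension_of_card_eq hcard
  have hBv : B i₀ = v := hB i₀ rfl
  rw [← LinearMap.det_toMatrix B.toBasis]
  have hmat : LinearMap.toMatrix B.toBasis B.toBasis
      ((Smap a b v : EuclideanSpace ℝ (Fin d) →L[ℝ] EuclideanSpace ℝ (Fin d)) :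
        EuclideanSpace ℝ (Fin d) →ₗ[ℝ] EuclideanSpace ℝ (Fin d)) =
      Matrix.diagonal (fun i => if i = i₀ then a else b) := by
    ext i j
    rw [LinearMap.toMatrix_apply]
    simp only [OrthonormalBasis.coe_toBasis, ContinuousLinearMap.coe_coe]
    rw [B.coe_toBasis_repr_apply, B.repr_apply_apply]
    rw [Smap_apply]
    have hite := orthonormal_iff_ite.mp B.orthonormal
    simp only [inner_add_right, real_inner_smul_right, ← hBv, hite]
    rcases eq_or_ne j i₀ with hji | hji
    · rcases eq_or_ne i j with hij | hij
      · simp [hij, hji, Matrix.diagonal]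
      · have hii₀ : i ≠ i₀ := fun h => hij (h.trans hji.symm)
        simp [hji, hii₀, Matrix.diagonal]
    · rcases eq_or_ne i j with hij | hij
      · simp [hij, hji, Ne.symm hji, Matrix.diagonal]
      · simp [hij, hji, Ne.symm hji, Matrix.diagonal, Matrix.diagonal_apply_ne _ hij]
  rw [hmat, Matrix.det_diagonal]
  rw [← Finset.mul_prod_erase Finset.univ _ (Finset.mem_univ i₀)]
  rw [if_pos rfl]
  congr 1
  rw [Finset.prod_congr rfl (fun x hx => if_neg (Finset.ne_of_mem_erase hx))]
  rw [Finset.prod_const, Finset.card_erase_of_mem (Finset.mem_univ i₀), Finset.card_univ,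
    Fintype.card_fin]


set_option maxHeartbeats 1000000 in
set_option synthInstance.maxHeartbeats 400000 in
lemma john_symmetric (d : ℕ) (hd : 1 ≤ d) (K : Set (EuclideanSpace ℝ (Fin d)))
    (hKconv : Convex ℝ K) (hKopen : IsOpen K) (hKbdd : Bornology.IsBounded K)
    (h0K : (0 : EuclideanSpace ℝ (Fin d)) ∈ K)
    (hKsym : ∀ x ∈ K, -x ∈ K) :
    ∃ Ψ : EuclideanSpace ℝ (Fin d) ≃ₗ[ℝ] EuclideanSpace ℝ (Fin d),
      closedBall 0 1 ⊆ closure (⇑Ψ '' K) ∧ ⇑Ψ '' K ⊆ closedBall 0 (Real.sqrt d) := by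
  classical
  haveI : Nontrivial (EuclideanSpace ℝ (Fin d)) := by
    refine ⟨EuclideanSpace.single (⟨0, hd⟩ : Fin d) (1:ℝ), 0, fun h => ?_⟩
    have := congrArg (fun z => ‖z‖) h
    simp [EuclideanSpace.norm_single] at this
  -- small ball inside K
  obtain ⟨r₂, hr₂pos, hr₂⟩ := Metric.isOpen_iff.mp hKopen 0 h0K
  set r := r₂ / 2 with hr
  have hrpos : 0 < r := by positivity
  have hrK : closedBall (0 : EuclideanSpace ℝ (Fin d)) r ⊆ K :=
    (closedBall_subset_ball (by simp [hr]; linarith)).trans hr₂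
  -- big ball containing K
  obtain ⟨M₀, hM₀⟩ := hKbdd.subset_closedBall 0
  set M := max M₀ 1 with hM
  have hMpos : (0:ℝ) < M := lt_of_lt_of_le one_pos (le_max_right _ _)
  have hKM : K ⊆ closedBall 0 M := hM₀.trans (closedBall_subset_closedBall (le_max_left _ _))
  have hclKM : closure K ⊆ closedBall 0 M := closure_minimal hKM Metric.isClosed_closedBall
  -- the compact set of admissible maps
  set 𝒯 : Set (EuclideanSpace ℝ (Fin d) →L[ℝ] EuclideanSpace ℝ (Fin d)) :=
    {T | ∀ y ∈ closedBall (0 : EuclideanSpace ℝ (Fin d)) 1, T y ∈ closure K} with h𝒯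
  have hT_closed : IsClosed 𝒯 := by
    have : 𝒯 = ⋂ y ∈ closedBall (0 : EuclideanSpace ℝ (Fin d)) 1,
        (fun T : EuclideanSpace ℝ (Fin d) →L[ℝ] EuclideanSpace ℝ (Fin d) => T y) ⁻¹'
          closure K := by
      ext T; simp [h𝒯, Set.mem_iInter₂]
    rw [this]
    exact isClosed_biInter fun y _ =>
      isClosed_closure.preimage (ContinuousLinearMap.apply ℝ (EuclideanSpace ℝ (Fin d)) y).continuous
  have hT_bdd : Bornology.IsBounded 𝒯 := by
    apply (isBounded_closedBall (x := (0 : EuclideanSpace ℝ (Fin d) →L[ℝ]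
      EuclideanSpace ℝ (Fin d))) (r := M)).subset
    intro T hT
    rw [mem_closedBall_zero_iff]
    apply ContinuousLinearMap.opNorm_le_bound _ hMpos.le
    intro x
    rcases eq_or_ne x 0 with rfl | hx
    · simp
    · have hxn : ‖x‖ ≠ 0 := norm_ne_zero_iff.2 hx
      have hz : ‖(‖x‖⁻¹ • x)‖ ≤ 1 := by
        rw [norm_smul, norm_inv, norm_norm]; field_simp; exact le_rfl
      have hmem : T (‖x‖⁻¹ • x) ∈ closure K := hT _ (by rwa [mem_closedBall_zero_iff])
      have hTz : ‖T (‖x‖⁻¹ • x)‖ ≤ M := mem_closedBall_zero_iff.1 (hclKM hmem)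
      have hTx : T x = ‖x‖ • T (‖x‖⁻¹ • x) := by
        rw [T.map_smul, smul_smul]; field_simp; rw [one_smul]
      rw [hTx, norm_smul, norm_norm]
      nlinarith [norm_nonneg x, norm_nonneg (T (‖x‖⁻¹ • x))]
  haveI : ProperSpace (EuclideanSpace ℝ (Fin d) →L[ℝ] EuclideanSpace ℝ (Fin d)) :=
    FiniteDimensional.proper ℝ _
  have hT_cpt : IsCompact 𝒯 := isCompact_of_isClosed_isBounded hT_closed hT_bdd
  have hT_ne : (r • ContinuousLinearMap.id ℝ (EuclideanSpace ℝ (Fin d))) ∈ 𝒯 := by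
    intro y hy
    apply subset_closure
    apply hrK
    rw [mem_closedBall_zero_iff] at hy ⊢
    simp only [ContinuousLinearMap.smul_apply, ContinuousLinearMap.id_apply, norm_smul,
      Real.norm_eq_abs, abs_of_pos hrpos]
    nlinarith [norm_nonneg y]
  obtain ⟨T₀, hT₀mem, hT₀max⟩ := hT_cpt.exists_isMaxOn ⟨_, hT_ne⟩
    ((continuous_abs.comp ContinuousLinearMap.continuous_det).continuousOn)
  have hT₀max' : ∀ T ∈ 𝒯, |ContinuousLinearMap.det T| ≤ |ContinuousLinearMap.det T₀| :=
    fun T hT => hT₀max hT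
  -- determinant of T₀ is at least r^d > 0
  have hdet_r : |ContinuousLinearMap.det (r • ContinuousLinearMap.id ℝ
      (EuclideanSpace ℝ (Fin d)))| = r ^ d := by
    show |LinearMap.det _| = r ^ d
    rw [ContinuousLinearMap.coe_smul, ContinuousLinearMap.coe_id, LinearMap.det_smul,
      LinearMap.det_id, mul_one, finrank_euclideanSpace_fin]
    exact abs_of_pos (pow_pos hrpos d)
  have hdetpos : 0 < |ContinuousLinearMap.det T₀| :=
    lt_of_lt_of_le (by rw [hdet_r]; positivity) (hT₀max' _ hT_ne)
  have hdet0 : ContinuousLinearMap.det T₀ ≠ 0 := by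
    intro h; rw [h, abs_zero] at hdetpos; exact lt_irrefl _ hdetpos
  set Φ : EuclideanSpace ℝ (Fin d) ≃L[ℝ] EuclideanSpace ℝ (Fin d) :=
    T₀.toContinuousLinearEquivOfDetNeZero hdet0 with hΦ
  have hΦap : ∀ x, Φ x = T₀ x := fun x => rfl
  set C : Set (EuclideanSpace ℝ (Fin d)) := (⇑T₀) ⁻¹' (closure K) with hCdef
  have hCconv : Convex ℝ C := hKconv.closure.linear_preimage
    (T₀ : EuclideanSpace ℝ (Fin d) →ₗ[ℝ] EuclideanSpace ℝ (Fin d))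
  have hCclosed : IsClosed C := isClosed_closure.preimage T₀.continuous
  have hballC : closedBall (0 : EuclideanSpace ℝ (Fin d)) 1 ⊆ C := fun y hy => hT₀mem y hy
  have h1d : (1:ℝ) ≤ Real.sqrt d := by
    rw [show (1:ℝ) = Real.sqrt 1 by simp]
    exact Real.sqrt_le_sqrt (by exact_mod_cast hd)
  have hkey : ∀ p ∈ K, ‖Φ.symm p‖ ≤ Real.sqrt d := by
    intro p hp
    by_contra hcon
    push_neg at hcon
    set q := Φ.symm p with hq
    set R := ‖q‖ with hRdef
    have hRgt1 : 1 < R := lt_of_le_of_lt h1d hcon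
    have hR0 : (0:ℝ) < R := lt_trans one_pos hRgt1
    have hR2 : (d:ℝ) < R^2 := by
      have h := Real.sq_sqrt (Nat.cast_nonneg d : (0:ℝ) ≤ d)
      nlinarith [Real.sqrt_nonneg (d:ℝ)]
    set v := R⁻¹ • q with hv
    have hRne : R ≠ 0 := ne_of_gt hR0
    have hvnorm : ‖v‖ = 1 := by
      rw [hv, norm_smul, norm_inv, Real.norm_eq_abs, abs_of_pos hR0, ← hRdef]
      field_simp
    have hqv : q = R • v := by rw [hv, smul_smul]; field_simp; rw [one_smul]
    obtain ⟨a, b, ha1, hb0, haR, hcon2, hab⟩ := exists_ab d hd hR0 hR2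
    have hqC : q ∈ C := by
      show T₀ q ∈ closure K
      rw [← hΦap, hq, Φ.apply_symm_apply]
      exact subset_closure hp
    have hqC' : -q ∈ C := by
      show T₀ (-q) ∈ closure K
      rw [map_neg, ← hΦap, hq, Φ.apply_symm_apply]
      exact subset_closure (hKsym p hp)
    have hSC : ∀ y ∈ closedBall (0 : EuclideanSpace ℝ (Fin d)) 1, Smap a b v y ∈ C := by
      intro y hy
      by_contra hSy
      obtain ⟨f, u₀, hfC, hfSy⟩ := geometric_hahn_banach_closed_point hCconv hCclosed hSy
      set w := (InnerProductSpace.toDual ℝ (EuclideanSpace ℝ (Fin d))).symm f with hw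
      have hfw : ∀ z, f z = ⟪w, z⟫ := fun z => (InnerProductSpace.toDual_symm_apply).symm
      have h0C : (0 : EuclideanSpace ℝ (Fin d)) ∈ C := hballC (mem_closedBall_self zero_le_one)
      have hu₀pos : 0 < u₀ := by
        have := hfC 0 h0C
        rwa [map_zero] at this
      have hNu : ‖w‖ < u₀ := by
        rcases eq_or_ne w 0 with h0 | h0
        · rw [h0, norm_zero]; exact hu₀pos
        · have hwn : ‖w‖ ≠ 0 := norm_ne_zero_iff.2 h0
          have hzmem : (‖w‖⁻¹ • w) ∈ C := by
            apply hballC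
            rw [mem_closedBall_zero_iff, norm_smul, norm_inv, norm_norm]
            field_simp; exact le_rfl
          have h := hfC _ hzmem
          rw [hfw, real_inner_smul_right, real_inner_self_eq_norm_sq] at h
          have : ‖w‖⁻¹ * ‖w‖^2 = ‖w‖ := by field_simp
          rwa [this] at h
      have hRt : R * |⟪w, v⟫| < u₀ := by
        have h1 := hfC q hqC
        have h2 := hfC _ hqC'
        rw [hfw, hqv, real_inner_smul_right] at h1
        rw [hfw, hqv, ← smul_neg, real_inner_smul_right, inner_neg_right] at h2
        rcases abs_cases ⟪w, v⟫ with ⟨he, _⟩ | ⟨he, _⟩ <;> rw [he] <;> nlinarith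
      have htw : ⟪v,w⟫^2 ≤ ‖w‖^2 := by
        have h := abs_real_inner_le_norm v w
        rw [hvnorm, one_mul] at h
        nlinarith [abs_nonneg ⟪v,w⟫, sq_abs ⟪v,w⟫]
      have hRt' : R * |⟪v, w⟫| < u₀ := by rwa [real_inner_comm v w] at hRt
      have hsupp : ‖Smap a b v w‖^2 ≤ max (‖w‖^2) (R^2*⟪v,w⟫^2) := by
        rw [Smap_norm_sq a b v w hvnorm]
        exact ellipse_support ha1 haR hRgt1 hb0.le hcon2 htw
      have hmax : max (‖w‖^2) (R^2*⟪v,w⟫^2) < u₀^2 := by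
        apply max_lt
        · nlinarith [norm_nonneg w]
        · nlinarith [abs_nonneg ⟪v,w⟫, sq_abs ⟪v,w⟫, mul_nonneg hR0.le (abs_nonneg ⟪v,w⟫)]
      have hSwu : ‖Smap a b v w‖ < u₀ := by
        nlinarith [norm_nonneg (Smap a b v w)]
      have hfin : f (Smap a b v y) < u₀ := by
        rw [hfw, Smap_inner]
        calc ⟪Smap a b v w, y⟫ ≤ ‖Smap a b v w‖ * ‖y‖ := real_inner_le_norm _ _
          _ ≤ ‖Smap a b v w‖ := by
              nlinarith [norm_nonneg (Smap a b v w), mem_closedBall_zero_iff.1 hy]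
          _ < u₀ := hSwu
      linarith
    set T₁ := T₀.comp (Smap a b v) with hT₁def
    have hT₁mem : T₁ ∈ 𝒯 := by
      intro y hy
      exact hSC y hy
    have hdet₁ : |ContinuousLinearMap.det T₁| =
        |ContinuousLinearMap.det T₀| * (a * b^(d-1)) := by
      show |LinearMap.det _| = _
      rw [hT₁def, ContinuousLinearMap.toLinearMap_comp, LinearMap.det_comp, abs_mul,
        det_Smap hd a b v hvnorm]
      congr 1
      exact abs_of_pos (by positivity)
    have hle := hT₀max' T₁ hT₁mem
    rw [hdet₁] at hle
    nlinarith
  refine ⟨Φ.symm.toLinearEquiv, ?_, ?_⟩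
  · intro z hz
    have hzC : z ∈ C := hballC hz
    have himg : ⇑Φ.symm '' closure K = closure (⇑Φ.symm '' K) :=
      Φ.symm.toHomeomorph.image_closure K
    have : z ∈ ⇑Φ.symm '' closure K := by
      refine ⟨T₀ z, hzC, ?_⟩
      rw [← hΦap, Φ.symm_apply_apply]
    rw [himg] at this
    simpa using this
  · rintro _ ⟨p, hp, rfl⟩
    simp only [ContinuousLinearEquiv.coe_toLinearEquiv]
    rw [mem_closedBall_zero_iff]
    exact hkey p hp


set_option maxHeartbeats 1000000 in
/-- **Corollary of John's ellipsoid theorem, centrally symmetric case**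
(Proposition 4.4 / `prop:John`). For every non-empty convex open bounded centrally
symmetric `Q ⊆ ℝ^d` there is a linear bijection `Ψ : ℝ^d → ℝ^d` with
`τ_d/(4d)^{d/2} ≤ |Ψ(Q)|/(diam Ψ(Q))^d ≤ τ_d/2^{d/2}`. -/
theorem john_quotient_bound_centrally_symmetric
    (d : ℕ) (hd : 1 ≤ d) (Q : Set (EuclideanSpace ℝ (Fin d)))
    (hQne : Q.Nonempty) (hQconv : Convex ℝ Q) (hQopen : IsOpen Q)
    (hQbdd : Bornology.IsBounded Q)
    (hQsymm : ∃ x₀ ∈ Q, ∀ x, x₀ + x ∈ Q → x₀ - x ∈ Q) :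
    ∃ Ψ : EuclideanSpace ℝ (Fin d) ≃ₗ[ℝ] EuclideanSpace ℝ (Fin d),
      (volume (Metric.ball (0 : EuclideanSpace ℝ (Fin d)) 1)).toReal /
            (4 * (d : ℝ)) ^ ((d : ℝ) / 2)
          ≤ (volume (Ψ '' Q)).toReal / Metric.diam (Ψ '' Q) ^ d ∧
        (volume (Ψ '' Q)).toReal / Metric.diam (Ψ '' Q) ^ d ≤
          (volume (Metric.ball (0 : EuclideanSpace ℝ (Fin d)) 1)).toReal /
            (2 : ℝ) ^ ((d : ℝ) / 2) := by
  classical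
  obtain ⟨x₀, hx₀, hsym⟩ := hQsymm
  set K : Set (EuclideanSpace ℝ (Fin d)) := {x | x₀ + x ∈ Q} with hK
  have h0K : (0 : EuclideanSpace ℝ (Fin d)) ∈ K := by simp [hK, hx₀]
  have hKsym : ∀ x ∈ K, -x ∈ K := by
    intro x hx
    have := hsym x hx
    simpa [hK, sub_eq_add_neg] using this
  have hKopen : IsOpen K := hQopen.preimage (continuous_const.add continuous_id)
  have hKconv : Convex ℝ K := by
    intro x hx y hy a b ha hb hab
    show x₀ + (a • x + b • y) ∈ Q
    have h := hQconv hx hy ha hb hab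
    have he : a • (x₀ + x) + b • (x₀ + y) = (a+b) • x₀ + (a • x + b • y) := by module
    rw [hab, one_smul] at he
    rwa [he] at h
  have hKbdd : Bornology.IsBounded K := by
    obtain ⟨M₀, hM₀⟩ := hQbdd.subset_closedBall 0
    apply (Metric.isBounded_closedBall (x := (0:EuclideanSpace ℝ (Fin d)))
      (r := M₀ + ‖x₀‖)).subset
    intro x hx
    rw [mem_closedBall_zero_iff]
    have h1 : ‖x₀ + x‖ ≤ M₀ := mem_closedBall_zero_iff.1 (hM₀ hx)
    have h2 : ‖x‖ = ‖(x₀ + x) - x₀‖ := by rw [add_sub_cancel_left]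
    rw [h2]
    calc ‖(x₀+x) - x₀‖ ≤ ‖x₀+x‖ + ‖x₀‖ := norm_sub_le _ _
      _ ≤ M₀ + ‖x₀‖ := by linarith
  obtain ⟨Ψ, hball, hsub⟩ := john_symmetric d hd K hKconv hKopen hKbdd h0K hKsym
  refine ⟨Ψ, ?_⟩
  have hQK : Q = (fun z => x₀ + z) '' K := by
    ext y; constructor
    · intro hy
      exact ⟨y - x₀, by simp [hK, hy], by module⟩
    · rintro ⟨z, hz, rfl⟩; exact hz
  have hIm : ⇑Ψ '' Q = (fun z => Ψ x₀ + z) '' (⇑Ψ '' K) := by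
    rw [hQK, ← Set.image_comp, ← Set.image_comp]
    apply Set.image_congr
    intro z _
    simp [map_add]
  have hvol : volume (⇑Ψ '' Q) = volume (⇑Ψ '' K) := by
    rw [hIm, Set.image_add_left, measure_preimage_add]
  have hdiam : Metric.diam (⇑Ψ '' Q) = Metric.diam (⇑Ψ '' K) := by
    rw [hIm]
    apply Isometry.diam_image
    apply Isometry.of_dist_eq
    intro a b
    simp [dist_eq_norm]
  -- basic quantities
  set τ := (volume (Metric.ball (0 : EuclideanSpace ℝ (Fin d)) 1)).toReal with hτ
  set D := Metric.diam (⇑Ψ '' K) with hD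
  set V := (volume (⇑Ψ '' K)).toReal with hV
  rw [hvol, hdiam]
  haveI : Nontrivial (EuclideanSpace ℝ (Fin d)) := by
    refine ⟨EuclideanSpace.single (⟨0, hd⟩ : Fin d) (1:ℝ), 0, fun h => ?_⟩
    have := congrArg (fun z => ‖z‖) h
    simp [EuclideanSpace.norm_single] at this
  have hτpos : 0 < τ := by
    rw [hτ]
    exact ENNReal.toReal_pos (measure_ball_pos volume _ one_pos).ne'
      (measure_ball_lt_top).ne
  have hsd : (0:ℝ) < Real.sqrt d := Real.sqrt_pos.2 (by exact_mod_cast hd)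
  have h1d : (1:ℝ) ≤ Real.sqrt d := by
    rw [show (1:ℝ) = Real.sqrt 1 by simp]
    exact Real.sqrt_le_sqrt (by exact_mod_cast hd)
  -- bounded image, finiteness of volume
  have hΨKbdd : Bornology.IsBounded (⇑Ψ '' K) :=
    (Metric.isBounded_closedBall).subset hsub
  have hvolfin : volume (⇑Ψ '' K) ≠ ⊤ := by
    apply ne_of_lt
    apply lt_of_le_of_lt (measure_mono hsub)
    exact measure_closedBall_lt_top
  -- D bounds
  have hD2 : D ≤ 2 * Real.sqrt d := by
    rw [hD]
    calc Metric.diam (⇑Ψ '' K) ≤ Metric.diam (Metric.closedBall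
        (0:EuclideanSpace ℝ (Fin d)) (Real.sqrt d)) :=
          Metric.diam_mono hsub Metric.isBounded_closedBall
      _ ≤ 2 * Real.sqrt d := Metric.diam_closedBall (Real.sqrt_nonneg _)
  have hD1 : 2 ≤ D := by
    set e : EuclideanSpace ℝ (Fin d) := EuclideanSpace.single (⟨0, hd⟩ : Fin d) (1:ℝ) with he
    have hne : ‖e‖ = 1 := by simp [he, EuclideanSpace.norm_single]
    have he1 : e ∈ closure (⇑Ψ '' K) := hball (by
      rw [mem_closedBall_zero_iff, hne])
    have he2 : -e ∈ closure (⇑Ψ '' K) := hball (by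
      rw [mem_closedBall_zero_iff, norm_neg, hne])
    have hbd : Bornology.IsBounded (closure (⇑Ψ '' K)) := hΨKbdd.closure
    have := Metric.dist_le_diam_of_mem hbd he1 he2
    rw [Metric.diam_closure] at this
    rw [hD]
    refine le_trans (le_of_eq ?_) this
    rw [dist_eq_norm, sub_neg_eq_add, ← two_smul ℝ e, norm_smul, hne]
    simp
  have hDpos : 0 < D := lt_of_lt_of_le two_pos hD1
  -- V lower bound: τ ≤ V
  have hv1 : τ ≤ V := by
    have hcl : volume (closure (⇑Ψ '' K)) ≤ volume (⇑Ψ '' K) := by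
      have hsub2 : closure (⇑Ψ '' K) ⊆ (⇑Ψ '' K) ∪ frontier (⇑Ψ '' K) := by
        intro x hx
        by_cases h : x ∈ ⇑Ψ '' K
        · exact Or.inl h
        · exact Or.inr ⟨hx, fun h' => h (interior_subset h')⟩
      calc volume (closure (⇑Ψ '' K)) ≤ volume ((⇑Ψ '' K) ∪ frontier (⇑Ψ '' K)) :=
            measure_mono hsub2
        _ ≤ volume (⇑Ψ '' K) + volume (frontier (⇑Ψ '' K)) := measure_union_le _ _
        _ = volume (⇑Ψ '' K) := by
            have hconvim : Convex ℝ (⇑Ψ '' K) := by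
              have := hKconv.linear_image Ψ.toLinearMap
              simpa using this
            rw [Convex.addHaar_frontier volume hconvim, add_zero]
    have hmono : volume (Metric.ball (0 : EuclideanSpace ℝ (Fin d)) 1) ≤
        volume (⇑Ψ '' K) := by
      calc volume (Metric.ball (0 : EuclideanSpace ℝ (Fin d)) 1)
          ≤ volume (Metric.closedBall (0 : EuclideanSpace ℝ (Fin d)) 1) :=
            measure_mono Metric.ball_subset_closedBall
        _ ≤ volume (closure (⇑Ψ '' K)) := measure_mono hball
        _ ≤ volume (⇑Ψ '' K) := hcl
    exact ENNReal.toReal_mono hvolfin hmono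
  -- V upper bound: V ≤ (D/2)^d * τ
  have hv2 : V ≤ (D/2)^d * τ := by
    have hsubhalf : ⇑Ψ '' K ⊆ Metric.closedBall (0 : EuclideanSpace ℝ (Fin d)) (D/2) := by
      rintro _ ⟨p, hp, rfl⟩
      have hneg : -(Ψ p) ∈ ⇑Ψ '' K := ⟨-p, hKsym p hp, by simp⟩
      have := Metric.dist_le_diam_of_mem hΨKbdd ⟨p, hp, rfl⟩ hneg
      rw [dist_eq_norm, sub_neg_eq_add, ← two_smul ℝ (Ψ p), norm_smul] at this
      simp only [Real.norm_ofNat] at this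
      rw [mem_closedBall_zero_iff]
      rw [← hD] at this
      linarith
    have hmon : volume (⇑Ψ '' K) ≤
        volume (Metric.closedBall (0 : EuclideanSpace ℝ (Fin d)) (D/2)) :=
      measure_mono hsubhalf
    rw [MeasureTheory.Measure.addHaar_closedBall volume _ (by linarith : (0:ℝ) ≤ D/2),
      finrank_euclideanSpace_fin] at hmon
    have h2 := ENNReal.toReal_mono ?_ hmon
    · rw [ENNReal.toReal_mul, ENNReal.toReal_ofReal (by positivity)] at h2
      exact h2
    · exact ENNReal.mul_ne_top ENNReal.ofReal_ne_top (measure_ball_lt_top).ne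
  -- rpow algebra
  have hpow4 : (4 * (d : ℝ)) ^ ((d : ℝ) / 2) = (2 * Real.sqrt d)^d := by
    have h4d : (0:ℝ) ≤ 4 * d := by positivity
    rw [show (2 * Real.sqrt d) = Real.sqrt (4 * d) by
      rw [show (4:ℝ) * d = 2^2 * d by norm_num, Real.sqrt_mul (by positivity), Real.sqrt_sq
        (by norm_num : (0:ℝ) ≤ 2)]]
    rw [Real.sqrt_eq_rpow, ← Real.rpow_natCast ((4 * (d:ℝ)) ^ ((1:ℝ)/2)) d,
      ← Real.rpow_mul h4d]
    congr 1
    ring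
  have hpow2 : (2:ℝ) ^ ((d : ℝ) / 2) ≤ 2^d := by
    rw [← Real.rpow_natCast 2 d]
    apply Real.rpow_le_rpow_of_exponent_le one_le_two
    have : (0:ℝ) ≤ (d:ℝ) := Nat.cast_nonneg d
    linarith
  constructor
  · -- lower bound
    rw [hpow4]
    rw [div_le_div_iff₀ (by positivity) (by positivity)]
    calc τ * D^d ≤ V * D^d := by
          apply mul_le_mul_of_nonneg_right hv1 (by positivity)
      _ ≤ V * (2*Real.sqrt d)^d := by
          apply mul_le_mul_of_nonneg_left _ (le_trans hτpos.le hv1)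
          exact pow_le_pow_left₀ hDpos.le hD2 d
  · -- upper bound
    have hstep : V / D^d ≤ τ / 2^d := by
      rw [div_le_div_iff₀ (by positivity) (by positivity)]
      calc V * 2^d ≤ ((D/2)^d * τ) * 2^d := by
            apply mul_le_mul_of_nonneg_right hv2 (by positivity)
        _ = τ * D^d := by
            rw [div_pow]
            field_simp
    refine le_trans hstep ?_
    apply div_le_div_of_nonneg_left hτpos.le (by positivity) hpow2

end JohnAux
end
end
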